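/- Proposition (0/1 truth-theoretic interpretation, subject case): suppose the verb degrees are 0/1-valued, i.e. α(k,l) = 1 if (k,l) ∈ R and 0 otherwise for a relation R ⊆ U × U. Then the h-coordinate of the meaning vector m = μ( χ_P ⊗ 's( μ( χ_K ⊗ (id_N ⊗ ε)(verb ⊗ χ_L) ) ) ) equals the number of pairs (k,l) ∈ K × L with owns(h,k) and R(k,l) when h ∈ P, and equals 0 when h ∉ P; consequently the support of m equals the Montague interpretation of the clause, { h ∈ P | ∃ k ∈ K, owns(h,k) ∧ ∃ l ∈ L, R(k,l) }. -/

import Mathlib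

open TensorProduct

noncomputable def eVec (U : Type*) [DecidableEq U] (i : U) : U → ℝ := Pi.single i 1

noncomputable def muMap (U : Type*) :
    (U → ℝ) ⊗[ℝ] (U → ℝ) →ₗ[ℝ] (U → ℝ) :=
  TensorProduct.lift (LinearMap.mul ℝ (U → ℝ))

noncomputable def epsMap (U : Type*) [Fintype U] :
    (U → ℝ) ⊗[ℝ] (U → ℝ) →ₗ[ℝ] ℝ :=
  TensorProduct.lift (LinearMap.mk₂ ℝ (fun v w => ∑ i, v i * w i)
    (fun v v' w => by simp [add_mul, Finset.sum_add_distrib])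
    (fun c v w => by simp [Finset.mul_sum, mul_assoc])
    (fun v w w' => by simp [mul_add, Finset.sum_add_distrib])
    (fun c v w => by simp [Finset.mul_sum, mul_left_comm]))

noncomputable def deltaMap (U : Type*) [Fintype U] [DecidableEq U] :
    (U → ℝ) →ₗ[ℝ] (U → ℝ) ⊗[ℝ] (U → ℝ) where
  toFun v := ∑ i, v i • (eVec U i ⊗ₜ[ℝ] eVec U i)
  map_add' v w := by simp [add_smul, Finset.sum_add_distrib]
  map_smul' c v := by simp [smul_smul, Finset.smul_sum]

noncomputable def iotaMap (U : Type*) [Fintype U] : (U → ℝ) →ₗ[ℝ] ℝ where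
  toFun v := ∑ i, v i
  map_add' v w := by simp [Finset.sum_add_distrib]
  map_smul' c v := by simp [Finset.mul_sum]

noncomputable def etaMap (U : Type*) [Fintype U] [DecidableEq U] :
    ℝ →ₗ[ℝ] (U → ℝ) ⊗[ℝ] (U → ℝ) :=
  LinearMap.toSpanSingleton ℝ _ (∑ i, eVec U i ⊗ₜ[ℝ] eVec U i)

noncomputable def zetaMap (U : Type*) [Fintype U] [DecidableEq U] :
    ℝ →ₗ[ℝ] (U → ℝ) :=
  LinearMap.toSpanSingleton ℝ _ (∑ i, eVec U i)
/-- 0/1 truth-theoretic interpretation (subject case): if the verb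
    degrees are 0/1-valued, given by a relation R, then for h ∈ P the h-coordinate
    of m = μ( χ_P ⊗ 's( μ( χ_K ⊗ (id_N ⊗ ε)(verb ⊗ χ_L) ) ) ) counts the pairs
    (k,l) ∈ K × L with owns(h,k) and R(k,l), for h ∉ P it is 0, and the support of
    m is the Montague interpretation { h ∈ P | ∃ k ∈ K, owns(h,k) ∧ ∃ l ∈ L, R(k,l) }. -/
theorem possessive_subject_truth_theoretic (U : Type*) [Fintype U] [DecidableEq U]
    (P K L : Finset U) (α : U × U → ℝ)
    (owns : U → U → Prop) [DecidableRel owns]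
    (R : U → U → Prop) [DecidableRel R]
    (hα : ∀ k l : U, α (k, l) = if R k l then 1 else 0)
    (possS : (U → ℝ) →ₗ[ℝ] (U → ℝ))
    (hpossS : ∀ k : U, possS (eVec U k)
      = ∑ h ∈ Finset.univ.filter (fun h => owns h k), eVec U h)
    (m : U → ℝ)
    (hm : m = muMap U ((∑ h ∈ P, eVec U h) ⊗ₜ[ℝ]
      possS (muMap U ((∑ k ∈ K, eVec U k) ⊗ₜ[ℝ]
        (TensorProduct.rid ℝ (U → ℝ))
          ((LinearMap.lTensor (U → ℝ) (epsMap U))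
            ((TensorProduct.assoc ℝ (U → ℝ) (U → ℝ) (U → ℝ))
              ((∑ i : U, ∑ j : U, α (i, j) • (eVec U i ⊗ₜ[ℝ] eVec U j)) ⊗ₜ[ℝ]
                (∑ l ∈ L, eVec U l)))))))) :
    (∀ h : U, h ∈ P →
        m h = (((K ×ˢ L).filter (fun p => owns h p.1 ∧ R p.1 p.2)).card : ℝ)) ∧
    (∀ h : U, h ∉ P → m h = 0) ∧
    {h : U | m h ≠ 0} = {h : U | h ∈ P ∧ ∃ k ∈ K, owns h k ∧ ∃ l ∈ L, R k l} := by
    set_option synthInstance.maxHeartbeats 1000000 in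
  have key : ∀ u : U, m u = (if u ∈ P then (1:ℝ) else 0) *
      ∑ k ∈ K, (if owns u k then (1:ℝ) else 0) * ∑ l ∈ L, (if R k l then (1:ℝ) else 0) := by
    intro u
    have hinner : (TensorProduct.rid ℝ (U → ℝ))
          ((LinearMap.lTensor (U → ℝ) (epsMap U))
            ((TensorProduct.assoc ℝ (U → ℝ) (U → ℝ) (U → ℝ))
              ((∑ i : U, ∑ j : U, α (i, j) • (eVec U i ⊗ₜ[ℝ] eVec U j)) ⊗ₜ[ℝ]
                (∑ l ∈ L, eVec U l)))) = fun i => ∑ l ∈ L, α (i, l) := by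
      funext x
      simp [sum_tmul, smul_tmul', assoc_tmul, eVec, Pi.single_apply,
        Finset.sum_apply, Finset.mul_sum, Finset.sum_ite_eq, Finset.sum_ite_eq',
        mul_ite, ite_and, epsMap]
    have hmu : ∀ f g : U → ℝ, muMap U (f ⊗ₜ[ℝ] g) = f * g := fun f g => rfl
    set w : U → ℝ := muMap U ((∑ k ∈ K, eVec U k) ⊗ₜ[ℝ] (fun i => ∑ l ∈ L, α (i, l)))
      with hw
    have hwval : ∀ k : U, w k = (if k ∈ K then (1:ℝ) else 0) * ∑ l ∈ L, α (k, l) := by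
      intro k
      simp [hw, hmu, eVec, Pi.single_apply, Finset.sum_apply, Finset.sum_ite_eq']
    have hwdec : w = ∑ k : U, w k • eVec U k := by
      funext x
      simp [eVec, Pi.single_apply, Finset.sum_apply, Finset.sum_ite_eq']
    have hposs : ∀ x : U, possS w x = ∑ k : U, w k * (if owns x k then (1:ℝ) else 0) := by
      intro x
      conv_lhs => rw [hwdec]
      rw [map_sum]
      simp only [map_smul, hpossS]
      simp [eVec, Pi.single_apply, Finset.sum_apply, Finset.sum_ite_eq',
        Finset.mem_filter, smul_eq_mul]
    rw [hm, hinner, hmu]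
    have hP : (∑ h ∈ P, eVec U h) u = if u ∈ P then (1:ℝ) else 0 := by
      simp [eVec, Pi.single_apply, Finset.sum_apply, Finset.sum_ite_eq']
    rw [← hw]
    simp only [Pi.mul_apply, hP, hposs, hwval]
    congr 1
    simp only [ite_mul, one_mul, zero_mul]
    rw [Finset.sum_ite_mem, Finset.univ_inter]
    apply Finset.sum_congr rfl
    intro k hk
    rw [mul_comm]
    simp [hα]
  have hcard : ∀ h : U, (((K ×ˢ L).filter (fun p => owns h p.1 ∧ R p.1 p.2)).card : ℝ)
      = ∑ k ∈ K, (if owns h k then (1:ℝ) else 0) * ∑ l ∈ L, (if R k l then (1:ℝ) else 0) := by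
    intro h
    rw [Finset.card_filter]
    push_cast
    rw [Finset.sum_product]
    apply Finset.sum_congr rfl
    intro k hk
    rw [Finset.mul_sum]
    apply Finset.sum_congr rfl
    intro l hl
    by_cases h1 : owns h k <;> by_cases h2 : R k l <;> simp [h1, h2]
  refine ⟨fun h hh => by rw [key h, if_pos hh, one_mul, hcard],
    fun h hh => by rw [key h, if_neg hh, zero_mul], ?_⟩
  ext h
  simp only [Set.mem_setOf_eq]
  by_cases hh : h ∈ P
  · rw [key h, if_pos hh, one_mul, ← hcard]
    simp only [hh, true_and]
    rw [Ne, Nat.cast_eq_zero, Finset.card_eq_zero, ← Ne,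
      ← Finset.nonempty_iff_ne_empty, Finset.filter_nonempty_iff]
    constructor
    · rintro ⟨⟨k, l⟩, hmem, ho, hr⟩
      rw [Finset.mem_product] at hmem
      exact ⟨k, hmem.1, ho, l, hmem.2, hr⟩
    · rintro ⟨k, hk, ho, l, hl, hr⟩
      exact ⟨(k, l), Finset.mem_product.mpr ⟨hk, hl⟩, ho, hr⟩
  · rw [key h, if_neg hh, zero_mul]
    simp [hh]
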